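/- arXiv:1410.3452 — 3 statements merged into one kernel-verified Lean document; each statement's English description precedes it below -/
import Mathlib

section
/- The family of Haar meager subsets of an abelian Polish group forms a σ-ideal: it contains the empty set, is closed under taking subsets, and is closed under countable unions. -/
open Set Pointwise MeasureTheory

/-- A set is Haar meager (Darji) if it is contained in a Borel set `B` such that some
continuous map from a nonempty compact metric space pulls back every translate of `B`
to a meager set. -/
def HaarMeager {X : Type*} [AddCommGroup X] [TopologicalSpace X] (A : Set X) : Prop :=
  ∃ B : Set X, A ⊆ B ∧ MeasurableSet[borel X] B ∧
    ∃ (K : Type) (_ : MetricSpace K) (_ : CompactSpace K) (_ : Nonempty K) (f : K → X),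
      Continuous f ∧ ∀ x : X, IsMeagre (f ⁻¹' (B + {x}))

/-- A set is D-measurable if it is the union of a Borel set and a Haar meager set. -/
def DMeasurable {X : Type*} [AddCommGroup X] [TopologicalSpace X] (A : Set X) : Prop :=
  ∃ B M : Set X, MeasurableSet[borel X] B ∧ HaarMeager M ∧ A = B ∪ M

section KuratowskiUlam

open Filter TopologicalSpace

variable {α β : Type*} [TopologicalSpace α] [TopologicalSpace β]

/-- Core: a closed nowhere dense set in a product has nowhere dense sections over a
comeager set of second coordinates. Needs second countability of the first factor. -/
lemma HaarMeagerAux.ku_core [SecondCountableTopology α] {F : Set (α × β)} (hcl : IsClosed F)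
    (hnwd : IsNowhereDense F) :
    {y : β | IsNowhereDense {x : α | (x, y) ∈ F}} ∈ residual β := by
  have hFi : interior F = ∅ := hcl.isNowhereDense_iff.mp hnwd
  have key : ∀ V ∈ countableBasis α, IsOpen {y : β | ∃ x ∈ V, (x, y) ∉ F} ∧
      Dense {y : β | ∃ x ∈ V, (x, y) ∉ F} := by
    intro V hV
    constructor
    · have : {y : β | ∃ x ∈ V, (x, y) ∉ F} = Prod.snd '' ((V ×ˢ (univ : Set β)) ∩ Fᶜ) := by
        ext y
        simp only [mem_setOf_eq, mem_image, mem_inter_iff, mem_prod, mem_univ, and_true,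
          mem_compl_iff, Prod.exists]
        constructor
        · rintro ⟨x, hx, hxF⟩; exact ⟨x, y, ⟨⟨hx, hxF⟩, rfl⟩⟩
        · rintro ⟨x, y', ⟨⟨hx, hxF⟩, rfl⟩⟩; exact ⟨x, hx, hxF⟩
      rw [this]
      exact isOpenMap_snd _ (((isOpen_of_mem_countableBasis hV).prod isOpen_univ).inter
        hcl.isOpen_compl)
    · rw [dense_iff_inter_open]
      intro W hW hWne
      have hVne : V.Nonempty := nonempty_of_mem_countableBasis hV
      have hprod : (V ×ˢ W).Nonempty := hVne.prod hWne
      have : ¬ (V ×ˢ W ⊆ F) := by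
        intro hsub
        have : V ×ˢ W ⊆ interior F :=
          ((isOpen_of_mem_countableBasis hV).prod hW).subset_interior_iff.mpr hsub
        rw [hFi] at this
        exact hprod.not_subset_empty this
      rcases not_subset.1 this with ⟨⟨x, y⟩, hxy, hF⟩
      exact ⟨y, ⟨hxy.2, ⟨x, hxy.1, hF⟩⟩⟩
  have hmem : (⋂ V ∈ countableBasis α, {y : β | ∃ x ∈ V, (x, y) ∉ F}) ∈ residual β := by
    refine (countable_bInter_mem (countable_countableBasis α)).mpr ?_
    intro V hV
    exact residual_of_dense_open (key V hV).1 (key V hV).2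
  refine mem_of_superset hmem ?_
  intro y hy
  simp only [mem_iInter, mem_setOf_eq] at hy
  simp only [mem_setOf_eq]
  have hcls : IsClosed {x : α | (x, y) ∈ F} := hcl.preimage (Continuous.prodMk_left y)
  rw [hcls.isNowhereDense_iff, ← subset_empty_iff]
  intro x hx
  rcases (isBasis_countableBasis α).exists_subset_of_mem_open hx isOpen_interior with
    ⟨V, hV, hxV, hVsub⟩
  rcases hy V hV with ⟨x', hx'V, hx'F⟩
  exact hx'F (interior_subset (s := {x : α | (x, y) ∈ F}) (hVsub hx'V))

/-- Meager set in a product: comeager many second coordinates have meager sections. -/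
lemma HaarMeagerAux.ku_meager [SecondCountableTopology α] {M : Set (α × β)} (hM : IsMeagre M) :
    {y : β | IsMeagre {x : α | (x, y) ∈ M}} ∈ residual β := by
  rcases isMeagre_iff_countable_union_isNowhereDense.1 hM with ⟨S, hS, hSc, hsub⟩
  have hres : (⋂ t ∈ S, {y : β | IsNowhereDense {x : α | (x, y) ∈ closure t}}) ∈ residual β := by
    refine (countable_bInter_mem hSc).mpr ?_
    intro t ht
    exact HaarMeagerAux.ku_core isClosed_closure (hS t ht).closure
  refine mem_of_superset hres ?_
  intro y hy
  simp only [mem_iInter, mem_setOf_eq] at hy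
  simp only [mem_setOf_eq]
  rw [isMeagre_iff_countable_union_isNowhereDense]
  refine ⟨(fun t => {x : α | (x, y) ∈ closure t}) '' S, ?_, hSc.image _, ?_⟩
  · rintro _ ⟨t, ht, rfl⟩; exact hy t ht
  · intro x hx
    rcases hsub hx with ⟨t, ht, hxt⟩
    exact ⟨_, ⟨t, ht, rfl⟩, subset_closure hxt⟩

/-- One direction of Kuratowski–Ulam: a Baire measurable set all of whose sections
(over the second coordinate) are meager is itself meager. -/
lemma HaarMeagerAux.ku_main [SecondCountableTopology α] [BaireSpace α] [BaireSpace β]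
    {E : Set (α × β)} (hE : BaireMeasurableSet E)
    (hsec : ∀ y : β, IsMeagre {x : α | (x, y) ∈ E}) : IsMeagre E := by
  rcases hE.residualEq_isOpen with ⟨U, hU, hEU⟩
  have hM : IsMeagre (symmDiff E U) := by
    rw [IsMeagre]
    refine mem_of_superset hEU ?_
    intro p hp
    simp only [mem_setOf_eq, eq_iff_iff] at hp
    simp only [mem_compl_iff, symmDiff_def, sup_eq_union, mem_union, mem_diff]
    tauto
  have hUempty : U = ∅ := by
    by_contra hne
    rcases nonempty_iff_ne_empty.2 hne with ⟨⟨x₀, y₀⟩, hx₀⟩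
    rcases isOpen_prod_iff.1 hU x₀ y₀ hx₀ with ⟨V, W, hV, hW, hxV, hyW, hVW⟩
    have hdense : Dense {y : β | IsMeagre {x : α | (x, y) ∈ symmDiff E U}} :=
      dense_of_mem_residual (HaarMeagerAux.ku_meager hM)
    rcases hdense.inter_open_nonempty W hW ⟨y₀, hyW⟩ with ⟨y, hyW', hy⟩
    have hsub : V ⊆ {x : α | (x, y) ∈ E} ∪ {x : α | (x, y) ∈ symmDiff E U} := by
      intro x hx
      by_cases hxE : (x, y) ∈ E
      · exact Or.inl hxE
      · refine Or.inr ?_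
        have : (x, y) ∈ U := hVW ⟨hx, hyW'⟩
        simp [symmDiff_def, hxE, this]
    have hmea : IsMeagre V := by
      refine IsMeagre.mono hsub ?_
      rw [IsMeagre, compl_union]
      exact Filter.inter_mem (hsec y) hy
    have hdV : Dense Vᶜ := dense_of_mem_residual hmea
    rcases hdV.inter_open_nonempty V hV ⟨x₀, hxV⟩ with ⟨x, hx1, hx2⟩
    exact hx2 hx1
  refine hM.mono ?_
  intro p hp
  simp [symmDiff_def, hp, hUempty]

end KuratowskiUlam

section Restriction

variable {γ : Type*} [TopologicalSpace γ]

/-- A nowhere dense subset of `U` pulls back to a nowhere dense subset of `closure U`. -/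
lemma HaarMeagerAux.nwd_restrict {U t : Set γ} (hU : IsOpen U) (ht : IsNowhereDense t) :
    IsNowhereDense ((Subtype.val : closure U → γ) ⁻¹' (t ∩ U)) := by
  rw [IsNowhereDense, ← subset_empty_iff]
  intro p hp
  have h1 : closure ((Subtype.val : closure U → γ) ⁻¹' (t ∩ U)) ⊆
      Subtype.val ⁻¹' closure (t ∩ U) :=
    continuous_subtype_val.closure_preimage_subset _
  rcases mem_interior.1 hp with ⟨W, hWsub, hWopen, hpW⟩
  rcases isOpen_induced_iff.1 hWopen with ⟨V, hV, rfl⟩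
  have hVU : (V ∩ U).Nonempty := by
    have : (p : γ) ∈ closure U := p.2
    rw [mem_closure_iff] at this
    exact this V hV hpW
  have hsub2 : V ∩ U ⊆ closure t := by
    intro z hz
    have hz' : z ∈ closure U := subset_closure hz.2
    have : (⟨z, hz'⟩ : closure U) ∈ Subtype.val ⁻¹' V := hz.1
    have := h1 (hWsub this)
    exact closure_mono inter_subset_left this
  have : V ∩ U ⊆ interior (closure t) :=
    (hV.inter hU).subset_interior_iff.mpr hsub2
  rw [ht] at this
  exact (hVU.mono this).ne_empty rfl

/-- The boundary of `U` is nowhere dense in `closure U`. -/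
lemma HaarMeagerAux.boundary_nwd {U : Set γ} (hU : IsOpen U) :
    IsNowhereDense ((Subtype.val : closure U → γ) ⁻¹' (closure U \ U)) := by
  have hcl : IsClosed ((Subtype.val : closure U → γ) ⁻¹' (closure U \ U)) :=
    (isClosed_closure.sdiff hU).preimage continuous_subtype_val
  rw [hcl.isNowhereDense_iff, ← subset_empty_iff]
  intro p hp
  rcases mem_interior.1 hp with ⟨W, hWsub, hWopen, hpW⟩
  rcases isOpen_induced_iff.1 hWopen with ⟨V, hV, rfl⟩
  have hVU : (V ∩ U).Nonempty := by
    have : (p : γ) ∈ closure U := p.2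
    rw [mem_closure_iff] at this
    exact this V hV hpW
  rcases hVU with ⟨z, hzV, hzU⟩
  have hz' : z ∈ closure U := subset_closure hzU
  have : (⟨z, hz'⟩ : closure U) ∈ Subtype.val ⁻¹' V := hzV
  have := hWsub this
  exact this.2 hzU

/-- A meager set of the ambient space restricts to a meager subset of the closure of
any open set. -/
lemma HaarMeagerAux.meager_restrict {U M : Set γ} (hU : IsOpen U) (hM : IsMeagre M) :
    IsMeagre ((Subtype.val : closure U → γ) ⁻¹' M) := by
  rcases isMeagre_iff_countable_union_isNowhereDense.1 hM with ⟨S, hS, hSc, hsub⟩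
  rw [isMeagre_iff_countable_union_isNowhereDense]
  refine ⟨insert ((Subtype.val : closure U → γ) ⁻¹' (closure U \ U))
      ((fun t => (Subtype.val : closure U → γ) ⁻¹' (t ∩ U)) '' S), ?_, ?_, ?_⟩
  · rintro t' ht'
    rcases ht' with rfl | ⟨t, ht, rfl⟩
    · exact HaarMeagerAux.boundary_nwd hU
    · exact HaarMeagerAux.nwd_restrict hU (hS t ht)
  · exact (hSc.image _).insert _
  · intro a ha
    simp only [mem_preimage] at ha
    by_cases haU : (a : γ) ∈ U
    · rcases hsub ha with ⟨t, ht, hat⟩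
      exact ⟨_, mem_insert_of_mem _ ⟨t, ht, rfl⟩, by exact ⟨hat, haU⟩⟩
    · exact ⟨_, mem_insert _ _, by exact ⟨a.2, haU⟩⟩

end Restriction

section MemAdd

variable {X : Type*} [AddCommGroup X]

lemma HaarMeagerAux.mem_add_singleton {B : Set X} {x y : X} :
    y ∈ B + {x} ↔ y - x ∈ B := by
  simp only [Set.mem_add, Set.mem_singleton_iff]
  constructor
  · rintro ⟨b, hb, z, rfl, rfl⟩
    simpa using hb
  · intro h
    exact ⟨y - x, h, x, rfl, by abel⟩

lemma HaarMeagerAux.add_mem_add_singleton {B : Set X} {x y c : X} :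
    y + c ∈ B + {x} ↔ y ∈ B + {x - c} := by
  rw [HaarMeagerAux.mem_add_singleton, HaarMeagerAux.mem_add_singleton]
  have h : y + c - x = y - (x - c) := by abel
  rw [h]

lemma HaarMeagerAux.sub_mem_add_singleton {B : Set X} {x y c : X} :
    y - c ∈ B + {x} ↔ y ∈ B + {x + c} := by
  rw [HaarMeagerAux.mem_add_singleton, HaarMeagerAux.mem_add_singleton]
  have h : y - c - x = y - (x + c) := by abel
  rw [h]

end MemAdd

theorem haarMeager_sigma_ideal (X : Type*) [AddCommGroup X] [TopologicalSpace X]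
    [IsTopologicalAddGroup X] [PolishSpace X] :
    HaarMeager (∅ : Set X) ∧
      (∀ A B : Set X, A ⊆ B → HaarMeager B → HaarMeager A) ∧
      (∀ s : ℕ → Set X, (∀ n, HaarMeager (s n)) → HaarMeager (⋃ n, s n)) := by
  refine ⟨?_, ?_, ?_⟩
  · -- empty set
    refine ⟨∅, Set.Subset.rfl, @MeasurableSet.empty X (borel X), PUnit, inferInstance, inferInstance,
      inferInstance, fun _ => 0, continuous_const, ?_⟩
    intro x
    simp only [Set.empty_add, Set.preimage_empty]
    exact IsMeagre.empty
  · -- monotone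
    rintro A B hAB ⟨C, hBC, hC, K, mK, cK, neK, f, hf, hmeag⟩
    exact ⟨C, hAB.trans hBC, hC, K, mK, cK, neK, f, hf, hmeag⟩
  · -- countable unions
    intro s hs
    classical
    choose B hsB hBm K mK cK neK f hf hmeag using hs
    letI := TopologicalSpace.upgradeIsCompletelyMetrizable X
    -- Step choice: given a compact set S and stage n, choose a point and a small
    -- neighborhood whose `f n`-translate perturbs elements of S by at most (1/2)^n.
    have exstep : ∀ (n : ℕ) (S : Set X), IsCompact S →
        ∃ (k0 : K n) (U : Set (K n)), IsOpen U ∧ k0 ∈ U ∧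
          ∀ a ∈ closure U, ∀ z ∈ S, dist (z + (f n a - f n k0)) z ≤ (1/2 : ℝ)^n := by
      intro n S hS
      -- tube lemma: a neighborhood V of 0 moving S by less than (1/2)^n
      obtain ⟨V, hV0, hVprop⟩ : ∃ V ∈ nhds (0 : X), ∀ v ∈ V, ∀ z ∈ S,
          dist (z + v) z ≤ (1/2 : ℝ)^n := by
        have hO : IsOpen {p : X × X | dist (p.1 + p.2) p.1 < (1/2 : ℝ)^n} :=
          isOpen_lt ((continuous_fst.add continuous_snd).dist continuous_fst) continuous_const
        have hsub : S ×ˢ ({0} : Set X) ⊆ {p : X × X | dist (p.1 + p.2) p.1 < (1/2 : ℝ)^n} := by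
          rintro ⟨z, v⟩ ⟨hz, hv⟩
          simp only [Set.mem_singleton_iff] at hv
          subst hv
          simp only [Set.mem_setOf_eq, add_zero, dist_self]
          positivity
        obtain ⟨u, w, hu, hw, hSu, h0w, huw⟩ :=
          generalized_tube_lemma hS isCompact_singleton hO hsub
        refine ⟨w, hw.mem_nhds (h0w rfl), ?_⟩
        intro v hv z hz
        have hm : ((z, v) : X × X) ∈ u ×ˢ w := ⟨hSu hz, hv⟩
        exact le_of_lt (huw hm)
      haveI := neK n
      set k0 : K n := Classical.arbitrary (K n) with hk0
      have hpre : (fun a => f n a - f n k0) ⁻¹' V ∈ nhds k0 := by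
        apply ContinuousAt.preimage_mem_nhds (((hf n).sub continuous_const).continuousAt)
        rw [Pi.sub_apply, sub_self]
        exact hV0
      obtain ⟨r, hr, hball⟩ := Metric.mem_nhds_iff.1 hpre
      refine ⟨k0, Metric.ball k0 (r/2), Metric.isOpen_ball,
        Metric.mem_ball_self (by linarith), ?_⟩
      intro a ha z hz
      have : a ∈ Metric.ball k0 r := by
        have h1 : a ∈ Metric.closedBall k0 (r/2) :=
          Metric.closure_ball_subset_closedBall ha
        exact Metric.closedBall_subset_ball (by linarith) h1
      exact hVprop _ (hball this) z hz
    -- the recursive construction of stages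
    let T : ℕ → (Σ' S : Set X, IsCompact S ∧ (0 : X) ∈ S) := fun n =>
      Nat.rec ⟨{0}, isCompact_singleton, Set.mem_singleton 0⟩
        (fun m ih =>
          ⟨ih.1 + ((fun a => f m a - f m (exstep m ih.1 ih.2.1).choose) ''
              closure (exstep m ih.1 ih.2.1).choose_spec.choose ∪ {0}),
            ih.2.1.add
              ((((isClosed_closure.isCompact).image
                  ((hf m).sub continuous_const)).union isCompact_singleton)),
            by
              have h0 : (0 : X) ∈ (fun a => f m a - f m (exstep m ih.1 ih.2.1).choose) ''
                  closure (exstep m ih.1 ih.2.1).choose_spec.choose ∪ ({0} : Set X) :=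
                Set.mem_union_right _ rfl
              simpa using Set.add_mem_add ih.2.2 h0⟩) n
    let k0 : ∀ n, K n := fun n => (exstep n (T n).1 (T n).2.1).choose
    let U : ∀ n, Set (K n) := fun n => (exstep n (T n).1 (T n).2.1).choose_spec.choose
    let ef : ∀ n, K n → X := fun n a => f n a - f n (k0 n)
    have hspec : ∀ n, IsOpen (U n) ∧ k0 n ∈ U n ∧
        ∀ a ∈ closure (U n), ∀ z ∈ (T n).1,
          dist (z + ef n a) z ≤ (1/2 : ℝ)^n := fun n =>
      (exstep n (T n).1 (T n).2.1).choose_spec.choose_spec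
    have hTsucc : ∀ n, (T (n+1)).1 = (T n).1 + (ef n '' closure (U n) ∪ {0}) := fun n => rfl
    have hTzero : (T 0).1 = {0} := rfl
    have hmono : ∀ m n, m ≤ n → (T m).1 ⊆ (T n).1 := by
      intro m n h
      induction h with
      | refl => exact Set.Subset.rfl
      | @step p h ih =>
        refine ih.trans ?_
        intro z hz
        rw [hTsucc]
        have h0 : (0 : X) ∈ ef p '' closure (U p) ∪ {0} := Set.mem_union_right _ rfl
        simpa using Set.add_mem_add hz h0
    -- partial sums over finite index sets belong to the stages
    have hsum : ∀ (N : ℕ) (T' : Finset ℕ) (g : ∀ m, K m), (∀ m, g m ∈ closure (U m)) →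
        T' ⊆ Finset.range N → (∑ m ∈ T', ef m (g m)) ∈ (T N).1 := by
      intro N
      induction N with
      | zero =>
        intro T' g hg hsub
        have : T' = ∅ := by
          rwa [Finset.range_zero, Finset.subset_empty] at hsub
        subst this
        simp [hTzero]
      | succ N ih =>
        intro T' g hg hsub
        by_cases hN : N ∈ T'
        · have hT'sub : T'.erase N ⊆ Finset.range N := by
            intro m hm
            rw [Finset.mem_erase] at hm
            have := hsub hm.2
            rw [Finset.mem_range] at this ⊢
            omega
          have h1 := ih (T'.erase N) g hg hT'sub
          have h2 : ef N (g N) ∈ ef N '' closure (U N) ∪ {0} :=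
            Set.mem_union_left _ (Set.mem_image_of_mem _ (hg N))
          have h3 := Set.add_mem_add h1 h2
          rw [← Finset.sum_erase_add T' _ hN]
          rw [hTsucc]
          exact h3
        · have hT'sub : T' ⊆ Finset.range N := by
            intro m hm
            have := hsub hm
            rw [Finset.mem_range] at this ⊢
            rcases Nat.lt_succ_iff_lt_or_eq.1 this with h | h
            · exact h
            · exact absurd (h ▸ hm) hN
          exact hmono N (N+1) (Nat.le_succ N) (ih T' g hg hT'sub)
    -- the witness space: product of the closures
    haveI hcKK : ∀ m, CompactSpace {a : K m // a ∈ closure (U m)} := fun m =>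
      isCompact_iff_compactSpace.mp isClosed_closure.isCompact
    let KK := ∀ m, {a : K m // a ∈ closure (U m)}
    letI : MetricSpace KK := PiCountable.metricSpace
    -- partial sums of the series, over an arbitrary predicate of indices
    let G : (ℕ → Prop) → KK → ℕ → X := fun A k N =>
      ∑ m ∈ Finset.range N, if A m then ef m (k m).1 else 0
    have hGmem : ∀ A k N, G A k N ∈ (T N).1 := by
      intro A k N
      have h1 : G A k N = ∑ m ∈ (Finset.range N).filter A, ef m (k m).1 :=
        (Finset.sum_filter _ _).symm
      rw [h1]
      exact hsum N _ (fun m => (k m).1) (fun m => (k m).2) (Finset.filter_subset _ _)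
    have hGdist : ∀ A k N, dist (G A k N) (G A k (N+1)) ≤ (1/2 : ℝ)^N := by
      intro A k N
      have hrec : G A k (N+1) = G A k N + (if A N then ef N (k N).1 else 0) :=
        Finset.sum_range_succ _ _
      by_cases hN : A N
      · rw [hrec, if_pos hN, dist_comm]
        exact (hspec N).2.2 (k N).1 (k N).2 (G A k N) (hGmem A k N)
      · rw [hrec, if_neg hN, add_zero, dist_self]
        positivity
    have hCauchy : ∀ A k, CauchySeq (fun N => G A k N) := by
      intro A k
      refine cauchySeq_of_le_geometric (1/2 : ℝ) 1 (by norm_num) ?_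
      intro n
      rw [one_mul]
      exact hGdist A k n
    have hFFex : ∀ A k, ∃ L, Filter.Tendsto (fun N => G A k N) Filter.atTop (nhds L) :=
      fun A k => cauchySeq_tendsto_of_complete (hCauchy A k)
    choose FF hFFt using hFFex
    have hFdist : ∀ A k N, dist (G A k N) (FF A k) ≤ 2 * (1/2 : ℝ)^N := by
      intro A k N
      have h := dist_le_of_le_geometric_of_tendsto (1/2 : ℝ) 1 (by norm_num)
        (fun n => by rw [one_mul]; exact hGdist A k n) (hFFt A k) N
      calc dist (G A k N) (FF A k) ≤ 1 * (1/2 : ℝ)^N / (1 - 1/2) := h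
        _ = 2 * (1/2 : ℝ)^N := by ring
    have hGcont : ∀ A N, Continuous (fun k : KK => G A k N) := by
      intro A N
      apply continuous_finset_sum
      intro m _
      by_cases hm : A m
      · simp only [if_pos hm]
        exact ((hf m).comp (continuous_subtype_val.comp (continuous_apply m))).sub continuous_const
      · simp only [if_neg hm]
        exact continuous_const
    have hFFcont : ∀ A, Continuous (FF A) := by
      intro A
      have hTU : TendstoUniformly (fun N k => G A k N) (FF A) Filter.atTop := by
        rw [Metric.tendstoUniformly_iff]
        intro ε hε
        obtain ⟨N0, hN0⟩ : ∃ N0 : ℕ, 2 * (1/2 : ℝ)^N0 < ε := by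
          obtain ⟨N0, h⟩ := exists_pow_lt_of_lt_one (show (0:ℝ) < ε/2 by linarith)
            (by norm_num : (1/2 : ℝ) < 1)
          exact ⟨N0, by linarith⟩
        filter_upwards [Filter.eventually_ge_atTop N0] with N hN k
        have h1 : dist (G A k N) (FF A k) ≤ 2 * (1/2 : ℝ)^N := hFdist A k N
        have h2 : (1/2 : ℝ)^N ≤ (1/2 : ℝ)^N0 :=
          pow_le_pow_of_le_one (by norm_num) (by norm_num) hN
        calc dist (FF A k) (G A k N) = dist (G A k N) (FF A k) := dist_comm _ _
          _ ≤ 2 * (1/2 : ℝ)^N := h1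
          _ ≤ 2 * (1/2 : ℝ)^N0 := by linarith
          _ < ε := hN0
      exact hTU.continuous (Filter.Eventually.of_forall (hGcont A)).frequently
    have hGsplit : ∀ (n : ℕ) (k : KK) (N : ℕ), n < N →
        G (fun _ => True) k N = ef n (k n).1 + G (fun m => m ≠ n) k N := by
      intro n k N hnN
      have h1 : G (fun _ => True) k N = ∑ m ∈ Finset.range N, ef m (k m).1 :=
        Finset.sum_congr rfl (fun m _ => if_pos trivial)
      have h2 : G (fun m => m ≠ n) k N = ∑ m ∈ (Finset.range N).erase n, ef m (k m).1 := by
        rw [← Finset.filter_ne' (Finset.range N) n, Finset.sum_filter]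
        refine Finset.sum_congr rfl (fun m _ => ?_)
        by_cases hm : m ≠ n
        · rw [if_pos hm, if_pos hm]
        · rw [if_neg hm, if_neg hm]
      rw [h1, h2]
      exact (Finset.add_sum_erase _ _ (Finset.mem_range.mpr hnN)).symm
    have hsplit : ∀ (n : ℕ) (k : KK),
        FF (fun _ => True) k = ef n (k n).1 + FF (fun m => m ≠ n) k := by
      intro n k
      refine tendsto_nhds_unique (hFFt _ k) ?_
      have h2 := (hFFt (fun m => m ≠ n) k).const_add (ef n (k n).1)
      refine h2.congr' ?_
      filter_upwards [Filter.eventually_gt_atTop n] with N hN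
      exact (hGsplit n k N hN).symm
    have hind : ∀ (n : ℕ) (k k' : KK), (∀ m, m ≠ n → k m = k' m) →
        FF (fun m => m ≠ n) k = FF (fun m => m ≠ n) k' := by
      intro n k k' hkk
      have hGeq : ∀ N, G (fun m => m ≠ n) k N = G (fun m => m ≠ n) k' N := by
        intro N
        refine Finset.sum_congr rfl ?_
        intro m _
        by_cases hm : m ≠ n
        · rw [if_pos hm, if_pos hm, hkk m hm]
        · rw [if_neg hm, if_neg hm]
      exact tendsto_nhds_unique (hFFt _ k) ((hFFt _ k').congr (fun N => (hGeq N).symm))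
    -- assemble the witness
    haveI hne : Nonempty KK := ⟨fun m => ⟨k0 m, subset_closure (hspec m).2.1⟩⟩
    haveI hKKcomp : CompactSpace KK := inferInstance
    refine ⟨⋃ n, B n, Set.iUnion_mono hsB, MeasurableSet.iUnion hBm, KK, inferInstance,
      inferInstance, hne, FF (fun _ => True), hFFcont _, ?_⟩
    intro x
    have hU2 : (⋃ n, B n) + ({x} : Set X) = ⋃ n, (B n + {x}) := Set.iUnion_add _ _
    rw [hU2, Set.preimage_iUnion]
    apply isMeagre_iUnion
    intro n
    letI : MeasurableSpace X := borel X
    haveI : BorelSpace X := ⟨rfl⟩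
    letI : MeasurableSpace KK := borel KK
    haveI : BorelSpace KK := ⟨rfl⟩
    have hBx : ∀ y : X, MeasurableSet (B n + {y}) := by
      intro y
      have he : B n + {y} = (fun z : X => z - y) ⁻¹' (B n) := by
        ext z
        rw [Set.mem_preimage, HaarMeagerAux.mem_add_singleton]
      rw [he]
      exact (continuous_id.sub continuous_const).measurable (hBm n)
    have hEmeas : MeasurableSet (FF (fun _ => True) ⁻¹' (B n + {x})) :=
      (hFFcont _).measurable (hBx x)
    let KT : ℕ → Type := fun m => {a : K m // a ∈ closure (U m)}
    let h : KK ≃ₜ KT n × (∀ m : {m // m ≠ n}, KT m) := Homeomorph.piSplitAt n KT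
    set E : Set KK := FF (fun _ => True) ⁻¹' (B n + {x}) with hEdef
    set E' := (h.symm) ⁻¹' E with hE'def
    have hE'b : BaireMeasurableSet E' :=
      BaireMeasurableSet.preimage h.symm.continuous h.symm.isOpenMap
        hEmeas.baireMeasurableSet
    have hsec : ∀ r : (∀ m : {m // m ≠ n}, KT m), IsMeagre {a : KT n | (a, r) ∈ E'} := by
      intro r
      set a₀ : KT n := ⟨k0 n, subset_closure (hspec n).2.1⟩ with ha₀
      set c : X := FF (fun m => m ≠ n) (h.symm (a₀, r)) with hc
      have hcoord : ∀ (a : KT n), ((h.symm (a, r)) : KK) n = a := by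
        intro a
        have h1 : ((h.symm (a, r)) : KK) n = (Equiv.piSplitAt n KT).symm (a, r) n := rfl
        rw [h1, Equiv.piSplitAt_symm_apply, dif_pos rfl]
      have htail : ∀ a : KT n, FF (fun m => m ≠ n) (h.symm (a, r)) = c := by
        intro a
        refine hind n _ _ ?_
        intro m hm
        have e1 : (h.symm (a, r)) m = r ⟨m, hm⟩ := by
          have h1 : ((h.symm (a, r)) : KK) m = (Equiv.piSplitAt n KT).symm (a, r) m := rfl
          rw [h1, Equiv.piSplitAt_symm_apply, dif_neg hm]
        have e2 : (h.symm (a₀, r)) m = r ⟨m, hm⟩ := by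
          have h1 : ((h.symm (a₀, r)) : KK) m = (Equiv.piSplitAt n KT).symm (a₀, r) m := rfl
          rw [h1, Equiv.piSplitAt_symm_apply, dif_neg hm]
        rw [e1, e2]
      have hsecEq : {a : KT n | (a, r) ∈ E'} =
          (Subtype.val : closure (U n) → K n) ⁻¹'
            (f n ⁻¹' (B n + {x - c + f n (k0 n)})) := by
        ext a
        simp only [mem_setOf_eq, hE'def, Set.mem_preimage, hEdef]
        rw [hsplit n (h.symm (a, r)), htail a, hcoord a]
        rw [show ef n (a : K n) = f n (a : K n) - f n (k0 n) from rfl]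
        rw [HaarMeagerAux.add_mem_add_singleton, HaarMeagerAux.sub_mem_add_singleton]
      rw [hsecEq]
      exact HaarMeagerAux.meager_restrict (hspec n).1 (hmeag n _)
    have hE'meager : IsMeagre E' := HaarMeagerAux.ku_main hE'b hsec
    have hEeq : h ⁻¹' E' = E := by
      ext k
      simp [hE'def]
    rw [← hEeq]
    exact IsMeagre.preimage_of_isOpenMap h.continuous h.isOpenMap hE'meager
end

section
/- If A is a D-measurable, non-Haar-meager subset of an abelian Polish group X, then 0 is an interior point of A − A. -/
open Set Pointwise MeasureTheory

open Filter Topology TopologicalSpace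

section Aux

variable {α β : Type*} [TopologicalSpace α] [TopologicalSpace β]

lemma aux_not_isMeagre_of_isOpen [BaireSpace α] {V : Set α} (hV : IsOpen V)
    (hne : V.Nonempty) : ¬ IsMeagre V := by
  intro h
  obtain ⟨z, hz1, hz2⟩ := (dense_of_mem_residual h).inter_open_nonempty V hV hne
  exact hz2 hz1

lemma aux_isMeagre_union {s t : Set α} (hs : IsMeagre s) (ht : IsMeagre t) :
    IsMeagre (s ∪ t) := by
  rw [IsMeagre, compl_union]
  exact inter_mem hs ht

lemma aux_eventually_isNowhereDense_section [SecondCountableTopology β]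
    {t : Set (α × β)} (htc : IsClosed t) (htn : IsNowhereDense t) :
    ∀ᶠ x in residual α, IsNowhereDense {y | (x, y) ∈ t} := by
  have hU : Dense (tᶜ) := by
    rw [← interior_eq_empty_iff_dense_compl]
    have := htn
    rwa [IsNowhereDense, htc.closure_eq] at this
  have key : ∀ V ∈ countableBasis β, ∀ᶠ x in residual α,
      V.Nonempty → ∃ y ∈ V, (x, y) ∈ tᶜ := by
    intro V hV
    rcases eq_empty_or_nonempty V with rfl | hne
    · filter_upwards with x h
      exact absurd h (not_nonempty_empty)
    · have hopen : IsOpen {x : α | ∃ y ∈ V, (x, y) ∈ tᶜ} := by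
        have heq : {x : α | ∃ y ∈ V, (x, y) ∈ tᶜ} = ⋃ y ∈ V, (fun x => (x, y)) ⁻¹' tᶜ := by
          ext x; simp
        rw [heq]
        exact isOpen_biUnion fun y _ =>
          htc.isOpen_compl.preimage (continuous_id.prodMk continuous_const)
      have hdense : Dense {x : α | ∃ y ∈ V, (x, y) ∈ tᶜ} := by
        rw [dense_iff_inter_open]
        intro G hG hGne
        obtain ⟨⟨x, y⟩, hmem, hc⟩ := hU.inter_open_nonempty (G ×ˢ V)
          (hG.prod (isOpen_of_mem_countableBasis hV)) (hGne.prod hne)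
        exact ⟨x, hmem.1, y, hmem.2, hc⟩
      have hres := residual_of_dense_open hopen hdense
      filter_upwards [hres] with x hx _
      exact hx
  have hall := (eventually_countable_ball (countable_countableBasis β)).2
    (fun V hV => key V hV)
  filter_upwards [hall] with x hx
  have hsec : IsClosed {y | (x, y) ∈ t} :=
    htc.preimage (continuous_const.prodMk continuous_id)
  rw [hsec.isNowhereDense_iff, interior_eq_empty_iff_dense_compl,
    (isBasis_countableBasis β).dense_iff]
  intro V hV hVne
  obtain ⟨y, hyV, hyc⟩ := hx V hV hVne
  exact ⟨y, hyV, hyc⟩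

/-- Kuratowski-Ulam, easy direction: sections of a meager set are residually meager. -/
lemma aux_eventually_isMeagre_section [SecondCountableTopology β]
    {P : Set (α × β)} (hP : IsMeagre P) :
    ∀ᶠ x in residual α, IsMeagre {y | (x, y) ∈ P} := by
  obtain ⟨S, hnwd, hScnt, hsub⟩ := isMeagre_iff_countable_union_isNowhereDense.1 hP
  have key : ∀ t ∈ S, ∀ᶠ x in residual α, IsNowhereDense {y | (x, y) ∈ closure t} :=
    fun t ht => aux_eventually_isNowhereDense_section isClosed_closure (hnwd t ht).closure
  filter_upwards [(eventually_countable_ball hScnt).2 key] with x hx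
  rw [isMeagre_iff_countable_union_isNowhereDense]
  refine ⟨(fun t => {y | (x, y) ∈ closure t}) '' S, ?_, hScnt.image _, ?_⟩
  · rintro _ ⟨t, ht, rfl⟩
    exact hx t ht
  · intro y hy
    obtain ⟨t, ht, hyt⟩ := hsub hy
    exact mem_sUnion.2 ⟨_, mem_image_of_mem _ ht, subset_closure hyt⟩

/-- Kuratowski-Ulam, hard direction: a Baire measurable set all of whose vertical
sections are meager is meager. -/
lemma aux_isMeagre_of_sections [BaireSpace α] [BaireSpace β] [SecondCountableTopology β]
    {W : Set (α × β)} (hW : BaireMeasurableSet W)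
    (h : ∀ x : α, IsMeagre {y | (x, y) ∈ W}) : IsMeagre W := by
  obtain ⟨U, hUopen, hWU⟩ := hW.residualEq_isOpen
  have hR : {z : α × β | z ∈ W ↔ z ∈ U} ∈ residual _ := by
    have : ∀ᶠ z in residual (α × β), z ∈ W ↔ z ∈ U := by
      filter_upwards [hWU] with z hz
      exact iff_of_eq hz
    exact this
  rcases eq_empty_or_nonempty U with rfl | ⟨z₀, hz₀⟩
  · show Wᶜ ∈ residual _
    apply mem_of_superset hR
    intro z hz
    intro hzW
    exact hz.1 hzW
  · exfalso
    obtain ⟨G, V, hGopen, hVopen, hG, hV, hGV⟩ := isOpen_prod_iff.1 hUopen z₀.1 z₀.2 hz₀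
    have hP : IsMeagre (U \ W) := by
      show (U \ W)ᶜ ∈ residual _
      apply mem_of_superset hR
      intro z hz hzd
      exact hzd.2 (hz.2 hzd.1)
    have hsecP := aux_eventually_isMeagre_section (α := α) (β := β) hP
    obtain ⟨x, hxG, hxR⟩ := (dense_of_mem_residual hsecP).inter_open_nonempty
      G hGopen ⟨z₀.1, hG⟩
    have hVsub : V ⊆ {y | (x, y) ∈ W} ∪ {y | (x, y) ∈ U \ W} := by
      intro y hy
      have hxyU : (x, y) ∈ U := hGV ⟨hxG, hy⟩
      by_cases hw : (x, y) ∈ W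
      · exact Or.inl hw
      · exact Or.inr ⟨hxyU, hw⟩
    exact aux_not_isMeagre_of_isOpen hVopen ⟨z₀.2, hV⟩
      ((aux_isMeagre_union (h x) hxR).mono hVsub)

/-- Kuratowski-Ulam for horizontal sections. -/
lemma aux_isMeagre_of_sections' [BaireSpace α] [BaireSpace β] [SecondCountableTopology α]
    {W : Set (α × β)} (hW : BaireMeasurableSet W)
    (h : ∀ y : β, IsMeagre {x | (x, y) ∈ W}) : IsMeagre W := by
  have hcs : Continuous (Prod.swap : β × α → α × β) := continuous_swap
  have hos : IsOpenMap (Prod.swap : β × α → α × β) := by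
    have := (Homeomorph.prodComm β α).isOpenMap
    simpa using this
  have hcs' : Continuous (Prod.swap : α × β → β × α) := continuous_swap
  have hos' : IsOpenMap (Prod.swap : α × β → β × α) := by
    have := (Homeomorph.prodComm α β).isOpenMap
    simpa using this
  have hswap : IsMeagre (Prod.swap ⁻¹' W : Set (β × α)) := by
    apply aux_isMeagre_of_sections (hW.preimage hcs hos)
    intro y
    exact h y
  have hWeq : W = (Prod.swap : α × β → β × α) ⁻¹' (Prod.swap ⁻¹' W) := by
    ext z; simp
  rw [hWeq]
  exact hswap.preimage_of_isOpenMap hcs' hos'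

/-- Translation of a set as a preimage. -/
lemma aux_mem_add_singleton {X : Type*} [AddCommGroup X] {s : Set X} {a y : X} :
    y ∈ s + {a} ↔ y - a ∈ s := by
  rw [Set.add_singleton]
  constructor
  · rintro ⟨b, hb, rfl⟩
    simpa using hb
  · intro hy
    exact ⟨y - a, hy, sub_add_cancel y a⟩

lemma aux_add_singleton_eq_preimage {X : Type*} [AddCommGroup X] (s : Set X) (a : X) :
    s + {a} = (fun y => y - a) ⁻¹' s := by
  ext y
  exact aux_mem_add_singleton

lemma aux_sub_mem_sub {X : Type*} [AddCommGroup X] {s : Set X} {x a b : X}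
    (ha : a ∈ s + {x}) (hb : b ∈ s + {x}) : a - b ∈ s - s := by
  rw [aux_mem_add_singleton] at ha hb
  have : a - b = (a - x) - (b - x) := by abel
  rw [this]
  exact Set.sub_mem_sub ha hb

/-- The union of two Haar meager sets is Haar meager. -/
lemma HaarMeager.union' {X : Type*} [AddCommGroup X] [TopologicalSpace X]
    [IsTopologicalAddGroup X] {S T : Set X} (hS : HaarMeager S) (hT : HaarMeager T) :
    HaarMeager (S ∪ T) := by
  obtain ⟨B₁, hSB, hB₁, K₁, i₁, c₁, n₁, f₁, hf₁, hm₁⟩ := hS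
  obtain ⟨B₂, hTB, hB₂, K₂, i₂, c₂, n₂, f₂, hf₂, hm₂⟩ := hT
  letI : MeasurableSpace X := borel X
  haveI : BorelSpace X := ⟨rfl⟩
  refine ⟨B₁ ∪ B₂, union_subset_union hSB hTB, hB₁.union hB₂, K₁ × K₂, inferInstance,
    inferInstance, inferInstance, fun p => f₁ p.1 + f₂ p.2,
    (hf₁.comp continuous_fst).add (hf₂.comp continuous_snd), ?_⟩
  intro x
  rw [Set.union_add, preimage_union]
  borelize (K₁ × K₂)
  have hfm : Measurable (fun p : K₁ × K₂ => f₁ p.1 + f₂ p.2) :=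
    ((hf₁.comp continuous_fst).add (hf₂.comp continuous_snd)).measurable
  have htrans : ∀ (B : Set X), MeasurableSet B → ∀ z : X, MeasurableSet (B + {z}) := by
    intro B hB z
    rw [aux_add_singleton_eq_preimage]
    exact hB.preimage (continuous_id.sub continuous_const).measurable
  apply aux_isMeagre_union
  · -- horizontal sections
    apply aux_isMeagre_of_sections'
    · exact (hfm (htrans B₁ hB₁ x)).baireMeasurableSet
    · intro k₂
      have heq : {k₁ : K₁ | (k₁, k₂) ∈ (fun p : K₁ × K₂ => f₁ p.1 + f₂ p.2) ⁻¹' (B₁ + {x})}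
          = f₁ ⁻¹' (B₁ + {x - f₂ k₂}) := by
        ext k₁
        simp only [mem_setOf_eq, mem_preimage, aux_mem_add_singleton]
        constructor
        · intro h'; convert h' using 1; abel
        · intro h'; convert h' using 1; abel
      rw [heq]
      exact hm₁ _
  · -- vertical sections
    apply aux_isMeagre_of_sections
    · exact (hfm (htrans B₂ hB₂ x)).baireMeasurableSet
    · intro k₁
      have heq : {k₂ : K₂ | (k₁, k₂) ∈ (fun p : K₁ × K₂ => f₁ p.1 + f₂ p.2) ⁻¹' (B₂ + {x})}
          = f₂ ⁻¹' (B₂ + {x - f₁ k₁}) := by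
        ext k₂
        simp only [mem_setOf_eq, mem_preimage, aux_mem_add_singleton]
        constructor
        · intro h'; convert h' using 1; abel
        · intro h'; convert h' using 1; abel
      rw [heq]
      exact hm₂ _

/-- A Baire measurable set in Cantor space such that flipping any single coordinate
of any point exits the set, is meager. -/
lemma aux_isMeagre_of_flip_free {T : Set (ℕ → Bool)} (hT : BaireMeasurableSet T)
    (h : ∀ ε ∈ T, ∀ n : ℕ, Function.update ε n (!ε n) ∉ T) : IsMeagre T := by
  obtain ⟨U, hUopen, hTU⟩ := hT.residualEq_isOpen
  have hR : {z : ℕ → Bool | z ∈ T ↔ z ∈ U} ∈ residual _ := by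
    have : ∀ᶠ z in residual (ℕ → Bool), z ∈ T ↔ z ∈ U := by
      filter_upwards [hTU] with z hz
      exact iff_of_eq hz
    exact this
  rcases eq_empty_or_nonempty U with rfl | ⟨u, hu⟩
  · show Tᶜ ∈ residual _
    apply mem_of_superset hR
    intro z hz hzT
    exact hz.1 hzT
  · exfalso
    obtain ⟨v, ⟨y, m, rfl⟩, _, hvU⟩ :=
      (PiNat.isTopologicalBasis_cylinders (fun _ : ℕ => Bool)).exists_subset_of_mem_open
        hu hUopen
    -- flip map at coordinate m
    set φ : (ℕ → Bool) → (ℕ → Bool) := fun ε => Function.update ε m (!ε m) with hφ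
    have hφφ : ∀ ε, φ (φ ε) = ε := by
      intro ε
      funext i
      rcases eq_or_ne i m with rfl | hi
      · simp [hφ]
      · simp [hφ, Function.update_of_ne hi]
    have hφcont : Continuous φ := by
      apply continuous_pi
      intro i
      rcases eq_or_ne i m with rfl | hi
      · have : (fun ε : ℕ → Bool => φ ε i) = fun ε => !ε i := by
          funext ε; simp [hφ]
        rw [this]
        exact (continuous_of_discreteTopology (f := fun b : Bool => !b)).comp
          (continuous_apply i)
      · have : (fun ε : ℕ → Bool => φ ε i) = fun ε => ε i := by
          funext ε; simp [hφ, Function.update_of_ne hi]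
        rw [this]
        exact continuous_apply i
    have hφhom : IsOpenMap φ := by
      have : φ = (Homeomorph.mk (Equiv.mk φ φ hφφ hφφ) hφcont hφcont : (ℕ → Bool) ≃ₜ (ℕ → Bool)) := rfl
      rw [this]
      exact (Homeomorph.mk (Equiv.mk φ φ hφφ hφφ) hφcont hφcont).isOpenMap
    have hφcyl : ∀ ε ∈ PiNat.cylinder y m, φ ε ∈ PiNat.cylinder y m := by
      intro ε hε
      rw [PiNat.mem_cylinder_iff] at hε ⊢
      intro i hi
      rw [hφ]
      simp only []
      rw [Function.update_of_ne hi.ne]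
      exact hε i hi
    have hres : {z : ℕ → Bool | z ∈ T ↔ z ∈ U} ∩ φ ⁻¹' {z | z ∈ T ↔ z ∈ U}
        ∈ residual _ :=
      inter_mem hR (tendsto_residual_of_isOpenMap hφcont hφhom hR)
    have hopen : IsOpen (PiNat.cylinder y m) :=
      (PiNat.isTopologicalBasis_cylinders (fun _ : ℕ => Bool)).isOpen ⟨y, m, rfl⟩
    obtain ⟨ε, hεcyl, hεR, hεR'⟩ := (dense_of_mem_residual hres).inter_open_nonempty
      _ hopen ⟨y, PiNat.self_mem_cylinder y m⟩
    have hεT : ε ∈ T := hεR.2 (hvU hεcyl)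
    have hφT : φ ε ∈ T := hεR'.2 (hvU (hφcyl ε hεcyl))
    exact h ε hεT m hφT

end Aux

/-- Steinhaus-type core lemma: a Borel set whose difference set does not have `0` as an
interior point is Haar meager. -/
lemma aux_haarMeager_of_not_mem_interior {X : Type*} [AddCommGroup X] [TopologicalSpace X]
    [IsTopologicalAddGroup X] [PolishSpace X] {C : Set X} (hC : MeasurableSet[borel X] C)
    (h0 : (0 : X) ∉ interior (C - C)) : HaarMeager C := by
  letI := upgradeIsCompletelyMetrizable X
  -- choose the sequence x recursively
  set Q : ∀ n : ℕ, (Fin n → X) → X → Prop := fun n v y =>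
    y ∉ C - C ∧ ∀ e : Fin n → Bool,
      dist (∑ i, if e i then v i else 0) ((∑ i, if e i then v i else 0) + y) < (1/2 : ℝ)^n
    with hQdef
  have hQ : ∀ n v, ∃ y, Q n v y := by
    intro n v
    have hV : {y : X | ∀ e : Fin n → Bool,
        dist (∑ i, if e i then v i else 0) ((∑ i, if e i then v i else 0) + y)
          < (1/2 : ℝ)^n} ∈ 𝓝 (0 : X) := by
      have : ∀ᶠ y in 𝓝 (0 : X), ∀ e : Fin n → Bool,
          dist (∑ i, if e i then v i else 0) ((∑ i, if e i then v i else 0) + y)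
            < (1/2 : ℝ)^n := by
        rw [Filter.eventually_all]
        intro e
        set s : X := ∑ i, if e i then v i else 0
        have hcont : Continuous fun y : X => dist s (s + y) :=
          continuous_const.dist (continuous_const.add continuous_id)
        have hval : dist s (s + (0 : X)) = 0 := by simp
        have := hcont.continuousAt (x := (0 : X))
        have hItem : {r : ℝ | r < (1/2 : ℝ)^n} ∈ 𝓝 (dist s (s + (0:X))) := by
          rw [hval]
          exact Iio_mem_nhds (by positivity)
        exact this hItem
      exact this
    have hns : ¬ ({y : X | ∀ e : Fin n → Bool,
        dist (∑ i, if e i then v i else 0) ((∑ i, if e i then v i else 0) + y)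
          < (1/2 : ℝ)^n} ⊆ C - C) := by
      intro hsub
      exact h0 (mem_interior_iff_mem_nhds.2 (mem_of_superset hV hsub))
    obtain ⟨y, hy1, hy2⟩ := not_subset.1 hns
    exact ⟨y, hy2, hy1⟩
  choose pick hpick using hQ
  set g : ∀ n : ℕ, Fin n → X := fun n =>
    Nat.rec (motive := fun n => Fin n → X) (fun i => i.elim0)
      (fun n gv => Fin.snoc gv (pick n gv)) n with hgdef
  set x : ℕ → X := fun n => g (n+1) (Fin.last n) with hxdef
  have hgsucc : ∀ n, g (n+1) = Fin.snoc (g n) (pick n (g n)) := fun n => rfl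
  have hg : ∀ n, ∀ i : Fin n, g n i = x i.1 := by
    intro n
    induction n with
    | zero => intro i; exact i.elim0
    | succ n ih =>
      intro i
      refine Fin.lastCases ?_ ?_ i
      · rfl
      · intro j
        rw [hgsucc n, Fin.snoc_castSucc]
        exact ih j
  have hgx : ∀ n, g n = fun i : Fin n => x i.1 := fun n => funext fun i => hg n i
  have hx : ∀ n, Q n (fun i : Fin n => x i.1) (x n) := by
    intro n
    have hxn : x n = pick n (g n) := by
      show g (n+1) (Fin.last n) = _
      rw [hgsucc n, Fin.snoc_last]
    rw [hxn, ← hgx n]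
    exact hpick n (g n)
  have hxnot : ∀ n, x n ∉ C - C := fun n => (hx n).1
  -- partial sums
  set S : ℕ → (ℕ → Bool) → X := fun n ε => ∑ i ∈ Finset.range n, if ε i then x i else 0
    with hSdef
  have hdistx : ∀ n (ε : ℕ → Bool), dist (S n ε) (S n ε + x n) < (1/2 : ℝ)^n := by
    intro n ε
    have := (hx n).2 (fun i : Fin n => ε i.1)
    have hsum : (∑ i : Fin n, if ε i.1 then x i.1 else 0)
        = ∑ i ∈ Finset.range n, if ε i then x i else 0 :=
      Fin.sum_univ_eq_sum_range (fun k => if ε k then x k else 0) n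
    rwa [hsum] at this
  have hstep : ∀ n (ε : ℕ → Bool), dist (S n ε) (S (n+1) ε) ≤ (1/2 : ℝ)^n := by
    intro n ε
    have hsucc : S (n+1) ε = S n ε + (if ε n then x n else 0) :=
      Finset.sum_range_succ _ n
    rw [hsucc]
    cases hb : ε n
    · simp
    · simp only [if_pos rfl]
      exact le_of_lt (hdistx n ε)
  have hbound : ∀ (ε : ℕ → Bool) (n m : ℕ), n ≤ m →
      dist (S n ε) (S m ε) ≤ 2 * (1/2 : ℝ)^n := by
    intro ε n m hnm
    calc dist (S n ε) (S m ε) ≤ ∑ i ∈ Finset.Ico n m, dist (S i ε) (S (i+1) ε) :=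
          dist_le_Ico_sum_dist (fun k => S k ε) hnm
      _ ≤ ∑ i ∈ Finset.Ico n m, (1/2 : ℝ)^i :=
          Finset.sum_le_sum fun i _ => hstep i ε
      _ = ∑ i ∈ Finset.range (m - n), (1/2 : ℝ)^(n + i) :=
          Finset.sum_Ico_eq_sum_range _ n m
      _ = (1/2 : ℝ)^n * ∑ i ∈ Finset.range (m - n), (1/2 : ℝ)^i := by
          rw [Finset.mul_sum]
          exact Finset.sum_congr rfl fun i _ => pow_add _ n i
      _ ≤ (1/2 : ℝ)^n * 2 := by
          apply mul_le_mul_of_nonneg_left (sum_geometric_two_le _) (by positivity)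
      _ = 2 * (1/2 : ℝ)^n := by ring
  have hcauchy : ∀ ε : ℕ → Bool, CauchySeq (fun n => S n ε) := by
    intro ε
    apply cauchySeq_of_le_geometric (1/2 : ℝ) 1 (by norm_num)
    intro n
    simpa using hstep n ε
  choose F hF using fun ε => cauchySeq_tendsto_of_complete (hcauchy ε)
  have hFdist : ∀ (ε : ℕ → Bool) (n : ℕ), dist (S n ε) (F ε) ≤ 2 * (1/2 : ℝ)^n := by
    intro ε n
    apply le_of_tendsto (tendsto_const_nhds.dist (hF ε))
    filter_upwards [eventually_ge_atTop n] with m hm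
    exact hbound ε n m hm
  have hunif : TendstoUniformly (fun n ε => S n ε) F atTop := by
    rw [Metric.tendstoUniformly_iff]
    intro δ hδ
    obtain ⟨N, hN⟩ : ∃ N : ℕ, (1/2 : ℝ)^N < δ/2 :=
      exists_pow_lt_of_lt_one (by positivity) (by norm_num)
    filter_upwards [eventually_ge_atTop N] with n hn ε
    have h1 : dist (F ε) (S n ε) ≤ 2 * (1/2 : ℝ)^n := by
      rw [dist_comm]; exact hFdist ε n
    have h2 : (1/2 : ℝ)^n ≤ (1/2 : ℝ)^N :=
      pow_le_pow_of_le_one (by norm_num) (by norm_num) hn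
    calc dist (F ε) (S n ε) ≤ 2 * (1/2 : ℝ)^n := h1
      _ ≤ 2 * (1/2 : ℝ)^N := by linarith
      _ < 2 * (δ/2) := by linarith
      _ = δ := by ring
  have hScont : ∀ n : ℕ, Continuous (fun ε : ℕ → Bool => S n ε) := by
    intro n
    apply continuous_finset_sum
    intro i _
    exact (continuous_of_discreteTopology (f := fun b : Bool => if b then x i else 0)).comp
      (continuous_apply i)
  have hFcont : Continuous F :=
    hunif.continuous (Frequently.of_forall hScont)
  -- flip relation
  have hflip : ∀ (ε : ℕ → Bool) (n : ℕ), ε n = false →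
      F (Function.update ε n true) = F ε + x n := by
    intro ε n hεn
    have hSeq : ∀ m, n < m → S m (Function.update ε n true) = S m ε + x n := by
      intro m hm
      have hterm : ∀ k, (if Function.update ε n true k then x k else 0)
          = (if ε k then x k else 0) + (if k = n then x n else 0) := by
        intro k
        rcases eq_or_ne k n with rfl | hk
        · simp [Function.update_self, hεn]
        · simp [Function.update_of_ne hk, hk]
      calc S m (Function.update ε n true)
          = ∑ k ∈ Finset.range m,
            ((if ε k then x k else 0) + (if k = n then x n else 0)) :=
            Finset.sum_congr rfl fun k _ => hterm k
        _ = S m ε + ∑ k ∈ Finset.range m, (if k = n then x n else 0) := by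
            rw [Finset.sum_add_distrib]
        _ = S m ε + x n := by
            rw [Finset.sum_ite_eq' (Finset.range m) n (fun _ => x n),
              if_pos (Finset.mem_range.2 hm)]
    apply tendsto_nhds_unique (hF (Function.update ε n true))
    have htend : Tendsto (fun m => S m ε + x n) atTop (𝓝 (F ε + x n)) :=
      (hF ε).add_const (x n)
    apply htend.congr'
    filter_upwards [eventually_gt_atTop n] with m hm
    exact (hSeq m hm).symm
  -- assemble the witness
  letI : MeasurableSpace X := borel X
  haveI : BorelSpace X := ⟨rfl⟩
  refine ⟨C, subset_rfl, hC, (ℕ → Bool), PiNat.metricSpace, inferInstanceAs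
    (CompactSpace (ℕ → Bool)), inferInstanceAs (Nonempty (ℕ → Bool)), F, hFcont, ?_⟩
  intro z
  apply aux_isMeagre_of_flip_free
  · borelize (ℕ → Bool)
    have hCz : MeasurableSet (C + {z}) := by
      rw [aux_add_singleton_eq_preimage]
      exact hC.preimage (continuous_id.sub continuous_const).measurable
    exact (hFcont.measurable hCz).baireMeasurableSet
  · intro ε hε n hflipmem
    have key : x n ∈ C - C := by
      cases hb : ε n
      · -- ε n = false : F (update ε n true) = F ε + x n
        rw [hb] at hflipmem
        have heqn : F (Function.update ε n true) = F ε + x n := hflip ε n hb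
        have h1 : F (Function.update ε n true) ∈ C + {z} := by simpa using hflipmem
        have h2 : F ε ∈ C + {z} := hε
        have : F (Function.update ε n true) - F ε ∈ C - C := aux_sub_mem_sub h1 h2
        rwa [heqn, add_sub_cancel_left] at this
      · -- ε n = true
        rw [hb] at hflipmem
        set ε' : ℕ → Bool := Function.update ε n false with hε'def
        have hε'n : ε' n = false := by simp [hε'def]
        have hupdate : Function.update ε' n true = ε := by
          rw [hε'def, Function.update_idem]
          rw [← hb, Function.update_eq_self]
        have heqn : F ε = F ε' + x n := by
          rw [← hupdate]
          exact hflip ε' n hε'n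
        have h1 : F ε ∈ C + {z} := hε
        have h2 : F ε' ∈ C + {z} := by simpa [hε'def] using hflipmem
        have : F ε - F ε' ∈ C - C := aux_sub_mem_sub h1 h2
        rwa [heqn, add_sub_cancel_left] at this
    exact hxnot n key

theorem zero_mem_interior_sub_of_dMeasurable_not_haarMeager
    (X : Type*) [AddCommGroup X] [TopologicalSpace X] [IsTopologicalAddGroup X]
    [PolishSpace X] (A : Set X) (hA : DMeasurable A) (hA' : ¬ HaarMeager A) :
    (0 : X) ∈ interior (A - A) := by
  obtain ⟨B, M, hB, hM, rfl⟩ := hA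
  by_contra h0
  have hBA : B - B ⊆ (B ∪ M) - (B ∪ M) :=
    Set.sub_subset_sub subset_union_left subset_union_left
  have h0B : (0 : X) ∉ interior (B - B) := fun h => h0 (interior_mono hBA h)
  exact hA' ((aux_haarMeager_of_not_mem_interior hB h0B).union' hM)
end

section
/- In an abelian Polish group X without isolated points (e.g. a nontrivial real linear Polish space), every Haar meager set is meager; in particular X itself is not Haar meager. -/
open Set Pointwise MeasureTheory

open Filter Topology TopologicalSpace

section KuratowskiUlam

/-- If `W` is open and dense in a product with second-countable second factor,
then the section over comeagerly many `x` is dense. -/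
lemma dense_sections_of_dense_open {X Y : Type*} [TopologicalSpace X] [TopologicalSpace Y]
    [SecondCountableTopology Y] {W : Set (X × Y)} (hWo : IsOpen W) (hWd : Dense W) :
    {x : X | Dense (Prod.mk x ⁻¹' W)} ∈ residual X := by
  obtain ⟨b, hbc, hbne, hb⟩ := exists_countable_basis Y
  have key : ∀ V ∈ b, IsOpen (Prod.fst '' (W ∩ univ ×ˢ V)) ∧
      Dense (Prod.fst '' (W ∩ univ ×ˢ V)) := by
    intro V hV
    have hVo : IsOpen V := hb.isOpen hV
    have hVne : V.Nonempty := Set.nonempty_iff_ne_empty.2 (fun h => hbne (h ▸ hV))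
    constructor
    · exact isOpenMap_fst _ (hWo.inter (isOpen_univ.prod hVo))
    · rw [dense_iff_inter_open]
      intro u hu hune
      have : (u ×ˢ V ∩ W).Nonempty :=
        hWd.inter_open_nonempty _ (hu.prod hVo) (hune.prod hVne)
      obtain ⟨p, hp1, hp2⟩ := this
      exact ⟨p.1, (mem_prod.1 hp1).1, ⟨p, ⟨hp2, mem_univ _, (mem_prod.1 hp1).2⟩, rfl⟩⟩
  have hmem : (⋂ V ∈ b, Prod.fst '' (W ∩ univ ×ˢ V)) ∈ residual X := by
    refine (countable_bInter_mem hbc).2 fun V hV => ?_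
    exact residual_of_dense_open (key V hV).1 (key V hV).2
  refine mem_of_superset hmem fun x hx => ?_
  rw [mem_setOf_eq, hb.dense_iff]
  intro V hV hVne
  simp only [mem_iInter] at hx
  obtain ⟨p, ⟨hpW, -, hpV⟩, hpx⟩ := hx V hV
  exact ⟨p.2, hpV, by rwa [mem_preimage, ← hpx]⟩

/-- Kuratowski–Ulam, easy direction: sections of a meager set are comeagerly meager. -/
lemma meager_sections_of_meager {X Y : Type*} [TopologicalSpace X] [TopologicalSpace Y]
    [SecondCountableTopology Y] {A : Set (X × Y)} (hA : IsMeagre A) :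
    {x : X | IsMeagre (Prod.mk x ⁻¹' A)} ∈ residual X := by
  rw [IsMeagre, mem_residual_iff] at hA
  obtain ⟨S, hSo, hSd, hSc, hSsub⟩ := hA
  have hmem : (⋂ W ∈ S, {x : X | Dense (Prod.mk x ⁻¹' W)}) ∈ residual X :=
    (countable_bInter_mem hSc).2 fun W hW =>
      dense_sections_of_dense_open (hSo W hW) (hSd W hW)
  refine mem_of_superset hmem fun x hx => ?_
  simp only [mem_iInter] at hx
  rw [mem_setOf_eq, IsMeagre]
  have h1 : (⋂ W ∈ S, Prod.mk x ⁻¹' W) ∈ residual Y := by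
    refine (countable_bInter_mem hSc).2 fun W hW => ?_
    exact residual_of_dense_open ((hSo W hW).preimage (Continuous.prodMk_right x)) (hx W hW)
  refine mem_of_superset h1 fun y hy => ?_
  simp only [mem_iInter] at hy
  have : (x, y) ∈ ⋂₀ S := fun W hW => hy W hW
  exact hSsub this

/-- Kuratowski–Ulam, the direction we need: a Baire measurable set all of whose
sections are meager is meager. -/
lemma isMeagre_of_meager_sections {X Y : Type*} [TopologicalSpace X] [TopologicalSpace Y]
    [BaireSpace X] [BaireSpace Y] [SecondCountableTopology Y] {A : Set (X × Y)}
    (hA : BaireMeasurableSet A) (h : ∀ x : X, IsMeagre (Prod.mk x ⁻¹' A)) :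
    IsMeagre A := by
  obtain ⟨U, hUo, hAU⟩ := hA.residualEq_isOpen
  have hD : IsMeagre {p : X × Y | ¬ (p ∈ A ↔ p ∈ U)} := by
    rw [IsMeagre]
    have := Filter.eventuallyEq_set.mp hAU
    exact mem_of_superset this fun p hp hn => hn hp
  set D := {p : X × Y | ¬ (p ∈ A ↔ p ∈ U)} with hDdef
  have hUempty : U = ∅ := by
    by_contra hU
    obtain ⟨p0, hp0⟩ := Set.nonempty_iff_ne_empty.2 hU
    have hR := meager_sections_of_meager hD
    have hRd : Dense {x : X | IsMeagre (Prod.mk x ⁻¹' D)} := dense_of_mem_residual hR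
    have hfstU : IsOpen (Prod.fst '' U) := isOpenMap_fst _ hUo
    have : ((Prod.fst '' U) ∩ {x : X | IsMeagre (Prod.mk x ⁻¹' D)}).Nonempty :=
      hRd.inter_open_nonempty _ hfstU ⟨p0.1, p0, hp0, rfl⟩
    obtain ⟨x, ⟨p, hpU, hpx⟩, hxD⟩ := this
    have hUx : IsOpen (Prod.mk x ⁻¹' U) := hUo.preimage (Continuous.prodMk_right x)
    have hUxne : (Prod.mk x ⁻¹' U).Nonempty := ⟨p.2, by rwa [mem_preimage, ← hpx]⟩
    have hsub : Prod.mk x ⁻¹' U ⊆ Prod.mk x ⁻¹' A ∪ Prod.mk x ⁻¹' D := by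
      intro y hy
      by_cases hyA : (x, y) ∈ A
      · exact Or.inl hyA
      · exact Or.inr (fun hiff => hyA (hiff.2 hy))
    have hUxm : IsMeagre (Prod.mk x ⁻¹' U) := by
      refine IsMeagre.mono hsub ?_
      rw [IsMeagre, compl_union]
      exact inter_mem (h x) hxD
    have : Dense (Prod.mk x ⁻¹' U)ᶜ := dense_of_mem_residual hUxm
    obtain ⟨y, hy1, hy2⟩ := this.inter_open_nonempty _ hUx hUxne
    exact hy2 hy1
  refine IsMeagre.mono (fun p hp => ?_) hD
  simp only [hDdef, mem_setOf_eq, hUempty, mem_empty_iff_false, iff_false]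
  exact fun hn => hn hp

end KuratowskiUlam

/-- Every Haar meager set in an abelian Polish group is meager. -/
lemma haarMeager_imp_isMeagre
    (X : Type*) [AddCommGroup X] [TopologicalSpace X] [IsTopologicalAddGroup X]
    [PolishSpace X] (A : Set X) (hA : HaarMeager A) : IsMeagre A := by
  haveI : BaireSpace X := by letI := upgradeIsCompletelyMetrizable X; infer_instance
  obtain ⟨B, hAB, hB, K, _, _, _, f, hf, hsec⟩ := hA
  letI : MeasurableSpace X := borel X
  haveI : BorelSpace X := ⟨rfl⟩
  set M : Set (X × K) := (fun p : X × K => f p.2 - p.1) ⁻¹' B with hMdef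
  have hMmeas : BaireMeasurableSet M := by
    borelize (X × K)
    have hc : Continuous (fun p : X × K => f p.2 - p.1) :=
      (hf.comp continuous_snd).sub continuous_fst
    exact (hc.measurable hB).baireMeasurableSet
  have hsections : ∀ x : X, Prod.mk x ⁻¹' M = f ⁻¹' (B + {x}) := by
    intro x
    ext k
    simp only [hMdef, mem_preimage, Set.add_singleton, mem_image]
    constructor
    · intro h; exact ⟨f k - x, h, by abel⟩
    · rintro ⟨b, hb, hbx⟩; rwa [← hbx, add_sub_cancel_right]
  have hMmeager : IsMeagre M :=
    isMeagre_of_meager_sections hMmeas (fun x => by rw [hsections]; exact hsec x)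
  have hswap : IsMeagre ((Prod.swap : K × X → X × K) ⁻¹' M) :=
    hMmeager.preimage_of_isOpenMap continuous_swap (Homeomorph.prodComm K X).isOpenMap
  have hne : {k : K | IsMeagre (Prod.mk k ⁻¹' (Prod.swap ⁻¹' M))}.Nonempty :=
    (dense_of_mem_residual (meager_sections_of_meager hswap)).nonempty
  obtain ⟨k, hk⟩ := hne
  have hk' : IsMeagre ((fun x : X => f k - x) ⁻¹' B) := hk
  have hBmeager : IsMeagre B := by
    have hBeq : B = (fun x : X => f k - x) ⁻¹' ((fun x : X => f k - x) ⁻¹' B) := by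
      ext x; simp [sub_sub_cancel]
    rw [hBeq]
    exact hk'.preimage_of_isOpenMap
      (Homeomorph.subLeft (f k)).continuous (Homeomorph.subLeft (f k)).isOpenMap
  exact hBmeager.mono hAB

theorem haarMeager_isMeagre_of_no_isolated_points
    (X : Type*) [AddCommGroup X] [TopologicalSpace X] [IsTopologicalAddGroup X]
    [PolishSpace X] (hiso : ∀ x : X, (nhdsWithin x {x}ᶜ).NeBot) :
    (∀ A : Set X, HaarMeager A → IsMeagre A) ∧ ¬ HaarMeager (Set.univ : Set X) := by
  refine ⟨fun A hA => haarMeager_imp_isMeagre X A hA, fun h => ?_⟩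
  haveI : BaireSpace X := by letI := upgradeIsCompletelyMetrizable X; infer_instance
  have huniv : IsMeagre (Set.univ : Set X) := haarMeager_imp_isMeagre X _ h
  rw [IsMeagre, compl_univ] at huniv
  have : Dense (∅ : Set X) := dense_of_mem_residual huniv
  exact (this.nonempty).ne_empty rfl
end
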